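/- Let Ω be a set. Let T be a nonempty simplicial tree in which every vertex has at most countably many neighbors, let a group G act on T by graph automorphisms with finitely many orbits of vertices, and let δ from the vertices of T to Ω be a G-invariant map (δ(g·v) = δ(v) for all g and v); let R be the eventual value of the neighbor refinement sequence starting from the equivalence relation R_0 v w ⟺ δ(v) = δ(w). Let T′, G′, δ′ (with values in the same set Ω) and R′ be the same data for a second such tree. Then there exists a graph isomorphism φ from T to T′ with δ′(φ(v)) = δ(v) for every vertex v if and only if there exists a bijection β from the set of R-equivalence classes of vertices of T to the set of R′-equivalence classes of vertices of T′ such that: (a) for every R-class C, every v in C and every v′ in β(C) satisfy δ(v) = δ′(v′); and (b) for all R-classes C and D, every v in C and every v′ in β(C), the cardinality (in ℕ ∪ {∞}) of the set of neighbors of v lying in D equals the cardinality of the set of neighbors of v′ lying in β(D). -/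

import Mathlib

/-- The neighbor refinement sequence of a relation `R0` on the vertices of a graph `G`. -/
def nbhdRefine {V : Type*} (G : SimpleGraph V) (R0 : V → V → Prop) : ℕ → V → V → Prop
  | 0 => R0
  | (i + 1) => fun v w => R0 v w ∧ ∀ u : V,
      {x : V | G.Adj v x ∧ nbhdRefine G R0 i x u}.encard =
      {x : V | G.Adj w x ∧ nbhdRefine G R0 i x u}.encard

theorem nbhdRefine_equivalence {V : Type*} (G : SimpleGraph V) (R0 : V → V → Prop)
    (h : Equivalence R0) (i : ℕ) : Equivalence (nbhdRefine G R0 i) := by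
  induction i with
  | zero => exact h
  | succ i ih =>
    constructor
    · intro v
      exact ⟨h.refl v, fun u => rfl⟩
    · rintro v w ⟨h1, h2⟩
      exact ⟨h.symm h1, fun u => (h2 u).symm⟩
    · rintro v w x ⟨h1, h2⟩ ⟨h3, h4⟩
      exact ⟨h.trans h1 h3, fun u => (h2 u).trans (h4 u)⟩

/-- The setoid on the vertices of `G` given by the `s`-th stage of the neighbor refinement of
the partition of the vertices according to the values of a decoration `δ`. -/
def decorSetoid {V Ω : Type*} (G : SimpleGraph V) (δ : V → Ω) (s : ℕ) : Setoid V :=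
  ⟨nbhdRefine G (fun a b => δ a = δ b) s,
    nbhdRefine_equivalence G (fun a b => δ a = δ b)
      ⟨fun _ => rfl, fun h => h.symm, fun h₁ h₂ => h₁.trans h₂⟩ s⟩

section Helpers

open SimpleGraph

lemma encard_equiv_of_countable {A B : Type*} {S : Set A} {S' : Set B}
    (hS : S.Countable) (hS' : S'.Countable) (h : S.encard = S'.encard) :
    Nonempty (S ≃ S') := by
  rcases S.finite_or_infinite with hf | hi
  · have hf' : S'.Finite := by
      rw [← Set.not_infinite, ← Set.encard_eq_top_iff, ← h, Set.encard_eq_top_iff,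
        Set.not_infinite]
      exact hf
    have := hf.fintype
    have := hf'.fintype
    refine ⟨Fintype.equivOfCardEq ?_⟩
    have h1 := Set.encard_eq_coe_toFinset_card S
    have h2 := Set.encard_eq_coe_toFinset_card S'
    rw [h1, h2] at h
    rw [Set.toFinset_card, Set.toFinset_card] at h
    exact_mod_cast h
  · have hi' : S'.Infinite := by
      rw [← Set.encard_eq_top_iff, ← h, Set.encard_eq_top_iff]; exact hi
    have c1 : Countable S := hS.to_subtype
    have c2 : Countable S' := hS'.to_subtype
    have i1 : Infinite S := hi.to_subtype
    have i2 : Infinite S' := hi'.to_subtype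
    obtain ⟨d1⟩ := nonempty_denumerable (↥S)
    obtain ⟨d2⟩ := nonempty_denumerable (↥S')
    exact ⟨(Denumerable.eqv S).trans (Denumerable.eqv S').symm⟩

lemma encard_diff_singleton_eq {A B : Type*} {S : Set A} {S' : Set B} {a : A} {b : B}
    (h : S.encard = S'.encard) (ha : a ∈ S) (hb : b ∈ S') :
    (S \ {a}).encard = (S' \ {b}).encard := by
  have h1 := Set.encard_diff_singleton_add_one ha
  have h2 := Set.encard_diff_singleton_add_one hb
  have : (S \ {a}).encard + 1 = (S' \ {b}).encard + 1 := by rw [h1, h2, h]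
  exact WithTop.add_right_cancel (by simp : (1 : ℕ∞) ≠ ⊤) this

variable {V : Type*} {G : SimpleGraph V}

lemma dist_le_of_mem_support {v r x : V} (p : G.Walk v r) (hx : x ∈ p.support) :
    G.dist x r ≤ p.length := by
  classical
  calc G.dist x r ≤ (p.dropUntil x hx).length := SimpleGraph.dist_le _
    _ ≤ p.length := Walk.length_dropUntil_le p hx

lemma adj_dist_ne (hT : G.IsTree) (r : V) {x y : V} (h : G.Adj x y) :
    G.dist x r ≠ G.dist y r := by
  classical
  intro heq
  obtain ⟨px, hpx, hlx⟩ := (hT.isConnected x r).exists_path_of_dist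
  obtain ⟨py, hpy, hly⟩ := (hT.isConnected y r).exists_path_of_dist
  have hy : y ∉ px.support := by
    intro hmem
    have h1 : (px.takeUntil y hmem).length + (px.dropUntil y hmem).length = px.length := by
      have := congrArg Walk.length (px.take_spec hmem)
      rwa [Walk.length_append] at this
    have h2 : G.dist y r ≤ (px.dropUntil y hmem).length := SimpleGraph.dist_le _
    have h3 : (px.takeUntil y hmem).length ≠ 0 := fun h0 => h.ne (Walk.eq_of_length_eq_zero h0)
    omega
  have hp1 : (Walk.cons h.symm px).IsPath := hpx.cons hy
  obtain ⟨p, -, hup⟩ := hT.existsUnique_path y r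
  have e1 := hup _ hp1
  have e2 := hup _ hpy
  have : (Walk.cons h.symm px).length = py.length := by rw [e1, e2]
  rw [Walk.length_cons, hlx, hly] at this
  omega

lemma adj_dist_cases (hT : G.IsTree) (r : V) {x y : V} (h : G.Adj x y) :
    G.dist y r = G.dist x r + 1 ∨ G.dist x r = G.dist y r + 1 := by
  have h1 : G.dist y r ≤ G.dist x r + 1 := by
    calc G.dist y r ≤ G.dist y x + G.dist x r := hT.isConnected.dist_triangle
      _ ≤ 1 + G.dist x r := by
          have : G.dist y x ≤ 1 :=
            le_trans (SimpleGraph.dist_le (Walk.cons h.symm Walk.nil)) (by simp)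
          omega
      _ = G.dist x r + 1 := by omega
  have h2 : G.dist x r ≤ G.dist y r + 1 := by
    calc G.dist x r ≤ G.dist x y + G.dist y r := hT.isConnected.dist_triangle
      _ ≤ 1 + G.dist y r := by
          have : G.dist x y ≤ 1 :=
            le_trans (SimpleGraph.dist_le (Walk.cons h Walk.nil)) (by simp)
          omega
      _ = G.dist y r + 1 := by omega
  have := adj_dist_ne hT r h
  omega

lemma exists_parent (hT : G.IsTree) (r : V) {v : V} (h : G.dist v r ≠ 0) :
    ∃ a, G.Adj a v ∧ G.dist a r + 1 = G.dist v r := by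
  obtain ⟨p, hp, hl⟩ := (hT.isConnected v r).exists_path_of_dist
  cases p with
  | nil => simp at h
  | cons hadj q =>
    rename_i a
    refine ⟨a, hadj.symm, ?_⟩
    have h1 : G.dist a r ≤ q.length := SimpleGraph.dist_le q
    rw [Walk.length_cons] at hl
    rcases adj_dist_cases hT r hadj with h2 | h2 <;> omega

lemma parent_unique (hT : G.IsTree) (r : V) {v a c : V} (ha : G.Adj a v) (hc : G.Adj c v)
    (hda : G.dist a r + 1 = G.dist v r) (hdc : G.dist c r + 1 = G.dist v r) : a = c := by
  obtain ⟨pa, hpa, hla⟩ := (hT.isConnected a r).exists_path_of_dist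
  obtain ⟨pc, hpc, hlc⟩ := (hT.isConnected c r).exists_path_of_dist
  have hva : v ∉ pa.support := fun hmem => by
    have := dist_le_of_mem_support pa hmem; omega
  have hvc : v ∉ pc.support := fun hmem => by
    have := dist_le_of_mem_support pc hmem; omega
  have hp1 : (Walk.cons ha.symm pa).IsPath := hpa.cons hva
  have hp2 : (Walk.cons hc.symm pc).IsPath := hpc.cons hvc
  obtain ⟨p, -, hup⟩ := hT.existsUnique_path v r
  have e : (Walk.cons ha.symm pa) = (Walk.cons hc.symm pc) := (hup _ hp1).trans (hup _ hp2).symm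
  have := congrArg Walk.support e
  rw [Walk.support_cons, Walk.support_cons] at this
  have h2 : pa.support = pc.support := by simpa using this
  have ea := pa.support_eq_cons
  have ec := pc.support_eq_cons
  rw [ea, ec] at h2
  exact (List.cons.injEq _ _ _ _ ▸ h2).1

lemma nbhdRefine_to_R0 {R0 : V → V → Prop} {i : ℕ} {v w : V}
    (h : nbhdRefine G R0 i v w) : R0 v w := by
  cases i with
  | zero => exact h
  | succ i => exact h.1

/-- transport of the refinement sequence along a decoration-preserving isomorphism -/
lemma nbhdRefine_map {V' Ω : Type*} {G' : SimpleGraph V'}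
    (φ : G ≃g G') {δ : V → Ω} {δ' : V' → Ω} (hφ : ∀ v, δ' (φ v) = δ v) :
    ∀ (i : ℕ) (v w : V),
      nbhdRefine G (fun a b => δ a = δ b) i v w ↔
      nbhdRefine G' (fun a b => δ' a = δ' b) i (φ v) (φ w) := by
  intro i
  induction i with
  | zero => intro v w; simp only [nbhdRefine, hφ]
  | succ i ih =>
    intro v w
    have himg : ∀ (v u : V),
        {x' : V' | G'.Adj (φ v) x' ∧ nbhdRefine G' (fun a b => δ' a = δ' b) i x' (φ u)} =
        φ '' {x : V | G.Adj v x ∧ nbhdRefine G (fun a b => δ a = δ b) i x u} := by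
      intro v u
      ext x'
      constructor
      · rintro ⟨hadj, hr⟩
        refine ⟨φ.symm x', ⟨?_, ?_⟩, by simp⟩
        · have := φ.map_adj_iff (v := v) (w := φ.symm x')
          rw [← this]; simpa using hadj
        · rw [ih (φ.symm x') u]; simpa using hr
      · rintro ⟨x, ⟨hadj, hr⟩, rfl⟩
        exact ⟨φ.map_adj_iff.mpr hadj, (ih x u).mp hr⟩
    constructor
    · rintro ⟨h0, hc⟩
      refine ⟨by simp only [hφ]; exact h0, ?_⟩
      intro u'
      rw [show u' = φ (φ.symm u') by simp, himg, himg,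
        Function.Injective.encard_image φ.injective, Function.Injective.encard_image φ.injective]
      exact hc (φ.symm u')
    · rintro ⟨h0, hc⟩
      refine ⟨by simpa only [hφ] using h0, ?_⟩
      intro u
      have := hc (φ u)
      rwa [himg, himg, Function.Injective.encard_image φ.injective,
        Function.Injective.encard_image φ.injective] at this

end Helpers

theorem decorated_tree_isomorphism_iff_structure_invariants_agree
    {V V' Ω : Type*}
    (G : SimpleGraph V) (G' : SimpleGraph V')
    (hT : G.IsTree) (hT' : G'.IsTree)
    (hcount : ∀ v : V, (G.neighborSet v).Countable)
    (hcount' : ∀ v : V', (G'.neighborSet v).Countable)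
    {Γ Γ' : Type*} [Group Γ] [MulAction Γ V] [Group Γ'] [MulAction Γ' V']
    (hact : ∀ (g : Γ) (u v : V), G.Adj u v → G.Adj (g • u) (g • v))
    (hact' : ∀ (g : Γ') (u v : V'), G'.Adj u v → G'.Adj (g • u) (g • v))
    (hfin : Finite (Quotient (MulAction.orbitRel Γ V)))
    (hfin' : Finite (Quotient (MulAction.orbitRel Γ' V')))
    (δ : V → Ω) (δ' : V' → Ω)
    (hδ : ∀ (g : Γ) (v : V), δ (g • v) = δ v)
    (hδ' : ∀ (g : Γ') (v : V'), δ' (g • v) = δ' v)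
    (s s' : ℕ)
    (hs : ∀ i : ℕ, s ≤ i → ∀ v w : V,
      nbhdRefine G (fun a b => δ a = δ b) i v w ↔ nbhdRefine G (fun a b => δ a = δ b) s v w)
    (hs' : ∀ i : ℕ, s' ≤ i → ∀ v w : V',
      nbhdRefine G' (fun a b => δ' a = δ' b) i v w ↔
        nbhdRefine G' (fun a b => δ' a = δ' b) s' v w) :
    (∃ φ : G ≃g G', ∀ v : V, δ' (φ v) = δ v) ↔
    ∃ β : Quotient (decorSetoid G δ s) ≃ Quotient (decorSetoid G' δ' s'),
      (∀ (v : V) (v' : V'),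
        β (Quotient.mk (decorSetoid G δ s) v) = Quotient.mk (decorSetoid G' δ' s') v' →
        δ v = δ' v') ∧
      (∀ (v u : V) (v' u' : V'),
        β (Quotient.mk (decorSetoid G δ s) v) = Quotient.mk (decorSetoid G' δ' s') v' →
        β (Quotient.mk (decorSetoid G δ s) u) = Quotient.mk (decorSetoid G' δ' s') u' →
        {x : V | G.Adj v x ∧ nbhdRefine G (fun a b => δ a = δ b) s x u}.encard =
        {x : V' | G'.Adj v' x ∧ nbhdRefine G' (fun a b => δ' a = δ' b) s' x u'}.encard) := by
  have E' : Equivalence (nbhdRefine G' (fun a b => δ' a = δ' b) s') :=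
    (decorSetoid G' δ' s').iseqv
  constructor
  · rintro ⟨φ, hφ⟩
    have key : ∀ v w : V,
        nbhdRefine G (fun a b => δ a = δ b) s v w ↔
        nbhdRefine G' (fun a b => δ' a = δ' b) s' (φ v) (φ w) := by
      intro v w
      rw [← hs (max s s') (le_max_left s s') v w,
        nbhdRefine_map φ hφ (max s s') v w,
        hs' (max s s') (le_max_right s s') (φ v) (φ w)]
    refine ⟨Quotient.congr φ.toEquiv key, ?_, ?_⟩
    · intro v v' hb
      have hb' : Quotient.mk (decorSetoid G' δ' s') (φ v) =
          Quotient.mk (decorSetoid G' δ' s') v' := hb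
      have hr : nbhdRefine G' (fun a b => δ' a = δ' b) s' (φ v) v' := Quotient.exact hb'
      have := nbhdRefine_to_R0 hr
      rw [← hφ v]; exact this
    · intro v u v' u' hb1 hb2
      have hr1 : nbhdRefine G' (fun a b => δ' a = δ' b) s' (φ v) v' := Quotient.exact hb1
      have hr2 : nbhdRefine G' (fun a b => δ' a = δ' b) s' (φ u) u' := Quotient.exact hb2
      have himg : {x' : V' | G'.Adj (φ v) x' ∧
            nbhdRefine G' (fun a b => δ' a = δ' b) s' x' (φ u)} =
          φ '' {x : V | G.Adj v x ∧ nbhdRefine G (fun a b => δ a = δ b) s x u} := by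
        ext x'
        constructor
        · rintro ⟨hadj, hr⟩
          refine ⟨φ.symm x', ⟨?_, ?_⟩, by simp⟩
          · have := φ.map_adj_iff (v := v) (w := φ.symm x')
            rw [← this]; simpa using hadj
          · rw [key (φ.symm x') u]; simpa using hr
        · rintro ⟨x, ⟨hadj, hr⟩, rfl⟩
          exact ⟨φ.map_adj_iff.mpr hadj, (key x u).mp hr⟩
      have hsame : {x' : V' | G'.Adj v' x' ∧
            nbhdRefine G' (fun a b => δ' a = δ' b) s' x' u'} =
          {x' : V' | G'.Adj v' x' ∧
            nbhdRefine G' (fun a b => δ' a = δ' b) s' x' (φ u)} := by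
        ext x'
        exact and_congr_right fun _ =>
          ⟨fun h => E'.trans h (E'.symm hr2), fun h => E'.trans h hr2⟩
      have hstab : nbhdRefine G' (fun a b => δ' a = δ' b) (s' + 1) (φ v) v' :=
        (hs' (s' + 1) (Nat.le_succ s') (φ v) v').mpr hr1
      have hcnt := hstab.2 u'
      calc {x : V | G.Adj v x ∧ nbhdRefine G (fun a b => δ a = δ b) s x u}.encard
          = {x' : V' | G'.Adj (φ v) x' ∧
              nbhdRefine G' (fun a b => δ' a = δ' b) s' x' (φ u)}.encard := by
            rw [himg, Function.Injective.encard_image φ.injective]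
        _ = {x' : V' | G'.Adj (φ v) x' ∧
              nbhdRefine G' (fun a b => δ' a = δ' b) s' x' u'}.encard := by
            congr 1
            ext x'
            exact and_congr_right fun _ =>
              ⟨fun h => E'.trans h hr2, fun h => E'.trans h (E'.symm hr2)⟩
        _ = {x' : V' | G'.Adj v' x' ∧
              nbhdRefine G' (fun a b => δ' a = δ' b) s' x' u'}.encard := hcnt
  · rintro ⟨β, hβ1, hβ2⟩
    classical
    obtain ⟨r⟩ := hT.isConnected.nonempty
    obtain ⟨r', hr'⟩ := Quotient.exists_rep (β (Quotient.mk (decorSetoid G δ s) r))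
    -- relation vs quotient
    have hQ : ∀ x y : V, (Quotient.mk (decorSetoid G δ s) x = Quotient.mk (decorSetoid G δ s) y)
        ↔ nbhdRefine G (fun a b => δ a = δ b) s x y :=
      fun x y => ⟨fun h => Quotient.exact h, fun h => Quotient.sound h⟩
    have hQ' : ∀ x y : V',
        (Quotient.mk (decorSetoid G' δ' s') x = Quotient.mk (decorSetoid G' δ' s') y)
        ↔ nbhdRefine G' (fun a b => δ' a = δ' b) s' x y :=
      fun x y => ⟨fun h => Quotient.exact h, fun h => Quotient.sound h⟩
    -- neighbor counts indexed by classes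
    have hNcl : ∀ (v : V) (v' : V'),
        β (Quotient.mk (decorSetoid G δ s) v) = Quotient.mk (decorSetoid G' δ' s') v' →
        ∀ C : Quotient (decorSetoid G δ s),
        {x : V | G.Adj v x ∧ Quotient.mk (decorSetoid G δ s) x = C}.encard =
        {y : V' | G'.Adj v' y ∧ Quotient.mk (decorSetoid G' δ' s') y = β C}.encard := by
      intro v v' hv C
      obtain ⟨u, rfl⟩ := Quotient.exists_rep C
      obtain ⟨u', hu'⟩ := Quotient.exists_rep (β (Quotient.mk (decorSetoid G δ s) u))
      have hcnt := hβ2 v u v' u' hv hu'.symm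
      calc {x : V | G.Adj v x ∧ Quotient.mk (decorSetoid G δ s) x =
              Quotient.mk (decorSetoid G δ s) u}.encard
          = {x : V | G.Adj v x ∧ nbhdRefine G (fun a b => δ a = δ b) s x u}.encard := by
            congr 1; ext x; exact and_congr_right fun _ => hQ x u
        _ = {y : V' | G'.Adj v' y ∧ nbhdRefine G' (fun a b => δ' a = δ' b) s' y u'}.encard := hcnt
        _ = {y : V' | G'.Adj v' y ∧ Quotient.mk (decorSetoid G' δ' s') y =
              β (Quotient.mk (decorSetoid G δ s) u)}.encard := by
            congr 1; ext y; rw [← hu']; exact and_congr_right fun _ => (hQ' y u').symm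
    -- total parent function
    have hparx : ∀ v : V, ∃ a : V, G.dist v r ≠ 0 →
        G.Adj a v ∧ G.dist a r + 1 = G.dist v r := by
      intro v
      by_cases h : G.dist v r ≠ 0
      · obtain ⟨a, h1, h2⟩ := exists_parent hT r h
        exact ⟨a, fun _ => ⟨h1, h2⟩⟩
      · exact ⟨v, fun hc => absurd hc h⟩
    choose par hpar using hparx
    -- the invariant for partial maps
    let Good : ℕ → (V → V') → Prop := fun n f =>
      (∀ v : V, G.dist v r ≤ n →
        (Quotient.mk (decorSetoid G' δ' s') (f v) = β (Quotient.mk (decorSetoid G δ s) v)) ∧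
        G'.dist (f v) r' = G.dist v r) ∧
      (∀ v w : V, G.dist v r ≤ n → G.dist w r ≤ n → G.Adj v w → G'.Adj (f v) (f w)) ∧
      (∀ v w : V, G.dist v r ≤ n → G.dist w r ≤ n → f v = f w → v = w) ∧
      (∀ v' : V', G'.dist v' r' ≤ n → ∃ v : V, G.dist v r ≤ n ∧ f v = v')
    have good0 : Good 0 (fun _ => r') := by
      refine ⟨?_, ?_, ?_, ?_⟩
      · intro v hv
        have hv0 : v = r := hT.isConnected.dist_eq_zero_iff.mp (Nat.le_zero.mp hv)
        subst hv0
        exact ⟨hr', by rw [SimpleGraph.dist_self, SimpleGraph.dist_self]⟩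
      · intro v w hv hw hadj
        have hv0 : v = r := hT.isConnected.dist_eq_zero_iff.mp (Nat.le_zero.mp hv)
        have hw0 : w = r := hT.isConnected.dist_eq_zero_iff.mp (Nat.le_zero.mp hw)
        subst hv0; subst hw0
        exact absurd hadj (G.irrefl)
      · intro v w hv hw _
        have hv0 : v = r := hT.isConnected.dist_eq_zero_iff.mp (Nat.le_zero.mp hv)
        have hw0 : w = r := hT.isConnected.dist_eq_zero_iff.mp (Nat.le_zero.mp hw)
        rw [hv0, hw0]
      · intro v' hv'
        have hv0 : v' = r' := hT'.isConnected.dist_eq_zero_iff.mp (Nat.le_zero.mp hv')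
        exact ⟨r, by rw [SimpleGraph.dist_self], hv0.symm⟩
    -- the extension step
    have step : ∀ (n : ℕ) (f : V → V'), Good n f →
        ∃ g : V → V', Good (n + 1) g ∧ ∀ v : V, G.dist v r ≤ n → g v = f v := by
      intro n f hGf
      obtain ⟨hcls, hadjf, hinjf, hsurf⟩ := hGf
      -- matching families on child sets
      have key : ∀ (v : V) (C : Quotient (decorSetoid G δ s)),
          ∃ (ee : V → V') (ii : V' → V), G.dist v r = n →
          ((∀ x : V, (G.Adj v x ∧ G.dist x r = n + 1 ∧
              Quotient.mk (decorSetoid G δ s) x = C) →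
              ((G'.Adj (f v) (ee x) ∧ G'.dist (ee x) r' = n + 1 ∧
                Quotient.mk (decorSetoid G' δ' s') (ee x) = β C) ∧ ii (ee x) = x)) ∧
           (∀ y : V', (G'.Adj (f v) y ∧ G'.dist y r' = n + 1 ∧
                Quotient.mk (decorSetoid G' δ' s') y = β C) →
              ((G.Adj v (ii y) ∧ G.dist (ii y) r = n + 1 ∧
                Quotient.mk (decorSetoid G δ s) (ii y) = C) ∧ ee (ii y) = y))) := by
        intro v C
        by_cases hv : G.dist v r = n
        swap
        · exact ⟨fun _ => r', fun _ => r, fun h => absurd h hv⟩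
        obtain ⟨hclsv, hdv⟩ := hcls v (le_of_eq hv)
        set S : Set V := {x : V | G.Adj v x ∧ G.dist x r = n + 1 ∧
          Quotient.mk (decorSetoid G δ s) x = C} with hSdef
        set S' : Set V' := {y : V' | G'.Adj (f v) y ∧ G'.dist y r' = n + 1 ∧
          Quotient.mk (decorSetoid G' δ' s') y = β C} with hS'def
        have hN := hNcl v (f v) hclsv.symm C
        have hcard : S.encard = S'.encard := by
          rcases Nat.eq_zero_or_pos n with hn | hn
          · have e1 : S = {x : V | G.Adj v x ∧ Quotient.mk (decorSetoid G δ s) x = C} := by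
              ext x
              simp only [hSdef, Set.mem_setOf_eq]
              constructor
              · rintro ⟨h1, _, h3⟩; exact ⟨h1, h3⟩
              · rintro ⟨h1, h3⟩
                refine ⟨h1, ?_, h3⟩
                rcases adj_dist_cases hT r h1 with hc | hc <;> omega
            have e2 : S' = {y : V' | G'.Adj (f v) y ∧
                Quotient.mk (decorSetoid G' δ' s') y = β C} := by
              ext y
              simp only [hS'def, Set.mem_setOf_eq]
              constructor
              · rintro ⟨h1, _, h3⟩; exact ⟨h1, h3⟩
              · rintro ⟨h1, h3⟩
                refine ⟨h1, ?_, h3⟩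
                rcases adj_dist_cases hT' r' h1 with hc | hc <;> omega
            rw [e1, e2]; exact hN
          · have hne : G.dist v r ≠ 0 := by omega
            obtain ⟨hpadj, hpd⟩ := hpar v hne
            obtain ⟨hfpc, hfpd⟩ := hcls (par v) (by omega)
            have hadj' : G'.Adj (f (par v)) (f v) :=
              hadjf (par v) v (by omega) (by omega) hpadj
            have e1 : S = {x : V | G.Adj v x ∧
                Quotient.mk (decorSetoid G δ s) x = C} \ {par v} := by
              ext x
              simp only [hSdef, Set.mem_setOf_eq, Set.mem_diff, Set.mem_singleton_iff]
              constructor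
              · rintro ⟨h1, h2, h3⟩
                exact ⟨⟨h1, h3⟩, fun hx => by rw [hx] at h2; omega⟩
              · rintro ⟨⟨h1, h3⟩, hne2⟩
                refine ⟨h1, ?_, h3⟩
                rcases adj_dist_cases hT r h1 with hc | hc
                · omega
                · exact absurd (parent_unique hT r h1.symm hpadj (by omega) (by omega)) hne2
            have e2 : S' = {y : V' | G'.Adj (f v) y ∧
                Quotient.mk (decorSetoid G' δ' s') y = β C} \ {f (par v)} := by
              ext y
              simp only [hS'def, Set.mem_setOf_eq, Set.mem_diff, Set.mem_singleton_iff]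
              constructor
              · rintro ⟨h1, h2, h3⟩
                exact ⟨⟨h1, h3⟩, fun hy => by rw [hy] at h2; omega⟩
              · rintro ⟨⟨h1, h3⟩, hne2⟩
                refine ⟨h1, ?_, h3⟩
                rcases adj_dist_cases hT' r' h1 with hc | hc
                · omega
                · exact absurd (parent_unique hT' r' h1.symm hadj' (by omega) (by omega)) hne2
            rw [e1, e2]
            by_cases hC : Quotient.mk (decorSetoid G δ s) (par v) = C
            · refine encard_diff_singleton_eq hN ⟨hpadj.symm, hC⟩ ⟨hadj'.symm, ?_⟩
              rw [hfpc, hC]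
            · rw [Set.diff_singleton_eq_self (fun hm => hC hm.2),
                Set.diff_singleton_eq_self (fun hm => ?_)]
              · exact hN
              · have := hm.2
                rw [hfpc] at this
                exact hC (β.injective this)
        have hc1 : S.Countable := (hcount v).mono (fun x hx => hx.1)
        have hc2 : S'.Countable := (hcount' (f v)).mono (fun y hy => hy.1)
        obtain ⟨e⟩ := encard_equiv_of_countable hc1 hc2 hcard
        refine ⟨fun x => if hx : x ∈ S then (e ⟨x, hx⟩ : V') else r',
                fun y => if hy : y ∈ S' then ((e.symm ⟨y, hy⟩ : V)) else r,
                fun _ => ⟨fun x hx => ?_, fun y hy => ?_⟩⟩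
        · beta_reduce
          have hxS : x ∈ S := hx
          have h1 : (if hx : x ∈ S then (e ⟨x, hx⟩ : V') else r') = ↑(e ⟨x, hxS⟩) :=
            dif_pos hxS
          rw [h1]
          have h2 : (↑(e ⟨x, hxS⟩) : V') ∈ S' := (e ⟨x, hxS⟩).2
          refine ⟨h2, ?_⟩
          have h3 : (if hy : (↑(e ⟨x, hxS⟩) : V') ∈ S'
              then ((e.symm ⟨↑(e ⟨x, hxS⟩), hy⟩ : V)) else r)
              = ↑(e.symm ⟨↑(e ⟨x, hxS⟩), h2⟩) := dif_pos h2
          rw [h3]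
          show ↑(e.symm (e ⟨x, hxS⟩)) = x
          rw [Equiv.symm_apply_apply]
        · beta_reduce
          have hyS : y ∈ S' := hy
          have h1 : (if hy : y ∈ S' then ((e.symm ⟨y, hy⟩ : V)) else r) = ↑(e.symm ⟨y, hyS⟩) :=
            dif_pos hyS
          rw [h1]
          have h2 : (↑(e.symm ⟨y, hyS⟩) : V) ∈ S := (e.symm ⟨y, hyS⟩).2
          refine ⟨h2, ?_⟩
          have h3 : (if hx : (↑(e.symm ⟨y, hyS⟩) : V) ∈ S
              then (e ⟨↑(e.symm ⟨y, hyS⟩), hx⟩ : V') else r')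
              = ↑(e ⟨↑(e.symm ⟨y, hyS⟩), h2⟩) := dif_pos h2
          rw [h3]
          show ↑(e (e.symm ⟨y, hyS⟩)) = y
          rw [Equiv.apply_symm_apply]
      choose ee ii hk using key
      -- the extended map
      refine ⟨fun w => if h : G.dist w r = n + 1
          then ee (par w) (Quotient.mk (decorSetoid G δ s) w) w else f w, ?_, ?_⟩
      swap
      · intro v hv
        exact dif_neg (by omega)
      have hnew : ∀ w : V, G.dist w r = n + 1 →
          (G'.Adj (f (par w)) (ee (par w) (Quotient.mk (decorSetoid G δ s) w) w) ∧
           G'.dist (ee (par w) (Quotient.mk (decorSetoid G δ s) w) w) r' = n + 1 ∧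
           Quotient.mk (decorSetoid G' δ' s')
             (ee (par w) (Quotient.mk (decorSetoid G δ s) w) w) =
             β (Quotient.mk (decorSetoid G δ s) w)) ∧
          ii (par w) (Quotient.mk (decorSetoid G δ s) w)
            (ee (par w) (Quotient.mk (decorSetoid G δ s) w) w) = w := by
        intro w hw
        obtain ⟨hpadj, hpd⟩ := hpar w (by omega)
        exact (hk (par w) (Quotient.mk (decorSetoid G δ s) w) (by omega)).1 w
          ⟨hpadj, hw, rfl⟩
      refine ⟨?_, ?_, ?_, ?_⟩
      · -- classes and distances
        intro v hv
        beta_reduce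
        by_cases h : G.dist v r = n + 1
        · rw [dif_pos h]
          obtain ⟨⟨_, hd, hc⟩, _⟩ := hnew v h
          exact ⟨hc, by omega⟩
        · rw [dif_neg h]
          exact hcls v (by omega)
      · -- adjacency
        have claim : ∀ a b : V, G.dist a r ≤ n + 1 → G.dist b r ≤ n + 1 → G.Adj a b →
            G.dist b r = G.dist a r + 1 →
            G'.Adj (if h : G.dist a r = n + 1
                then ee (par a) (Quotient.mk (decorSetoid G δ s) a) a else f a)
              (if h : G.dist b r = n + 1
                then ee (par b) (Quotient.mk (decorSetoid G δ s) b) b else f b) := by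
          intro a b ha hb hadj hd
          by_cases hbn : G.dist b r = n + 1
          · have han : G.dist a r = n := by omega
            rw [dif_pos hbn, dif_neg (by omega)]
            obtain ⟨hpadj, hpd⟩ := hpar b (by omega)
            have hpab : par b = a :=
              parent_unique hT r hpadj hadj (by omega) (by omega)
            obtain ⟨⟨hadj', _, _⟩, _⟩ := hnew b hbn
            rw [← hpab]
            exact hadj'
          · rw [dif_neg hbn, dif_neg (by omega)]
            exact hadjf a b (by omega) (by omega) hadj
        intro a b ha hb hadj
        rcases adj_dist_cases hT r hadj with hd | hd
        · exact claim a b ha hb hadj hd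
        · exact (claim b a hb ha hadj.symm hd).symm
      · -- injectivity
        intro a b ha hb heq
        beta_reduce at heq
        by_cases han : G.dist a r = n + 1 <;> by_cases hbn : G.dist b r = n + 1
        · rw [dif_pos han, dif_pos hbn] at heq
          obtain ⟨⟨hadja, hda, hca⟩, hia⟩ := hnew a han
          obtain ⟨⟨hadjb, hdb, hcb⟩, hib⟩ := hnew b hbn
          obtain ⟨hpadja, hpda⟩ := hpar a (by omega)
          obtain ⟨hpadjb, hpdb⟩ := hpar b (by omega)
          obtain ⟨_, hdfa⟩ := hcls (par a) (by omega)
          obtain ⟨_, hdfb⟩ := hcls (par b) (by omega)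
          have hfp : f (par a) = f (par b) := by
            apply parent_unique hT' r' (v := ee (par a) (Quotient.mk (decorSetoid G δ s) a) a)
              hadja (by rw [heq]; exact hadjb) (by omega)
            rw [heq]; omega
          have hpp : par a = par b := hinjf _ _ (by omega) (by omega) hfp
          have hcc : Quotient.mk (decorSetoid G δ s) a = Quotient.mk (decorSetoid G δ s) b := by
            apply β.injective
            rw [← hca, ← hcb, heq]
          rw [← hia, ← hib, ← heq, hpp, hcc]
        · exfalso
          rw [dif_pos han, dif_neg hbn] at heq
          obtain ⟨⟨_, hda, _⟩, _⟩ := hnew a han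
          obtain ⟨_, hdfb⟩ := hcls b (by omega)
          rw [heq] at hda
          omega
        · exfalso
          rw [dif_neg han, dif_pos hbn] at heq
          obtain ⟨⟨_, hdb, _⟩, _⟩ := hnew b hbn
          obtain ⟨_, hdfa⟩ := hcls a (by omega)
          rw [← heq] at hdb
          omega
        · rw [dif_neg han, dif_neg hbn] at heq
          exact hinjf a b (by omega) (by omega) heq
      · -- surjectivity
        intro v' hv'
        by_cases hvn : G'.dist v' r' = n + 1
        · obtain ⟨p', hp'adj, hp'd⟩ := exists_parent hT' r' (v := v') (by omega)
          obtain ⟨p, hple, hfp⟩ := hsurf p' (by omega)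
          obtain ⟨hpc, hpdist⟩ := hcls p hple
          have hpn : G.dist p r = n := by rw [← hpdist, hfp]; omega
          set C : Quotient (decorSetoid G δ s) :=
            β.symm (Quotient.mk (decorSetoid G' δ' s') v') with hCdef
          have hv'mem : G'.Adj (f p) v' ∧ G'.dist v' r' = n + 1 ∧
              Quotient.mk (decorSetoid G' δ' s') v' = β C := by
            refine ⟨by rw [hfp]; exact hp'adj, hvn, ?_⟩
            rw [hCdef, Equiv.apply_symm_apply]
          obtain ⟨⟨hwadj, hwd, hwc⟩, hwe⟩ := (hk p C hpn).2 v' hv'mem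
          set w : V := ii p C v' with hwdef
          refine ⟨w, by omega, ?_⟩
          have hparw : par w = p := by
            obtain ⟨hpadjw, hpdw⟩ := hpar w (by omega)
            exact parent_unique hT r hpadjw hwadj (by omega) (by omega)
          beta_reduce
          rw [dif_pos (show G.dist w r = n + 1 from hwd), hparw, hwc]
          exact hwe
        · obtain ⟨v, hvle, hfv⟩ := hsurf v' (by omega)
          exact ⟨v, by omega, by beta_reduce; rw [dif_neg (by omega)]; exact hfv⟩
    -- the tower of approximations
    let stepFun : ℕ → (V → V') → (V → V') := fun n f =>
      if h : Good n f then (step n f h).choose else f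
    let F : ℕ → V → V' := fun n => Nat.rec (fun _ => r') (fun n fn => stepFun n fn) n
    have hGoodF : ∀ n : ℕ, Good n (F n) := by
      intro n
      induction n with
      | zero => exact good0
      | succ n ih =>
        have hFs : F (n + 1) = stepFun n (F n) := rfl
        have he : stepFun n (F n) = (step n (F n) ih).choose := dif_pos ih
        rw [hFs, he]
        exact (step n (F n) ih).choose_spec.1
    have hagree : ∀ n : ℕ, ∀ v : V, G.dist v r ≤ n → F (n + 1) v = F n v := by
      intro n v hv
      have hFs : F (n + 1) = stepFun n (F n) := rfl
      have he : stepFun n (F n) = (step n (F n) (hGoodF n)).choose := dif_pos (hGoodF n)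
      rw [hFs, he]
      exact (step n (F n) (hGoodF n)).choose_spec.2 v hv
    have hmono : ∀ (m n : ℕ), n ≤ m → ∀ v : V, G.dist v r ≤ n → F m v = F n v := by
      intro m n h
      induction h with
      | refl => intro v _; rfl
      | @step m' hm' ih =>
        intro v hv
        rw [hagree m' v (le_trans hv hm'), ih v hv]
    have hφm : ∀ (n : ℕ) (v : V), G.dist v r ≤ n → F (G.dist v r) v = F n v :=
      fun n v h => (hmono n (G.dist v r) h v le_rfl).symm
    have hcls2 : ∀ v : V, Quotient.mk (decorSetoid G' δ' s') (F (G.dist v r) v) =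
        β (Quotient.mk (decorSetoid G δ s) v) :=
      fun v => ((hGoodF (G.dist v r)).1 v le_rfl).1
    have hdist2 : ∀ v : V, G'.dist (F (G.dist v r) v) r' = G.dist v r :=
      fun v => ((hGoodF (G.dist v r)).1 v le_rfl).2
    have hinj : Function.Injective (fun v => F (G.dist v r) v) := by
      intro a b heq
      have heq' : F (G.dist a r) a = F (G.dist b r) b := heq
      rw [hφm (max (G.dist a r) (G.dist b r)) a (le_max_left _ _),
        hφm (max (G.dist a r) (G.dist b r)) b (le_max_right _ _)] at heq'
      exact (hGoodF _).2.2.1 a b (le_max_left _ _) (le_max_right _ _) heq'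
    have hsurj : Function.Surjective (fun v => F (G.dist v r) v) := by
      intro v'
      obtain ⟨v, hvle, hfv⟩ := (hGoodF (G'.dist v' r')).2.2.2 v' le_rfl
      refine ⟨v, ?_⟩
      show F (G.dist v r) v = v'
      rw [hφm (G'.dist v' r') v hvle]
      exact hfv
    have hadjφ : ∀ a b : V, G.Adj a b → G'.Adj (F (G.dist a r) a) (F (G.dist b r) b) := by
      intro a b hadj
      rw [hφm (max (G.dist a r) (G.dist b r)) a (le_max_left _ _),
        hφm (max (G.dist a r) (G.dist b r)) b (le_max_right _ _)]
      exact (hGoodF _).2.1 a b (le_max_left _ _) (le_max_right _ _) hadj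
    have hadjrev : ∀ a b : V, G'.Adj (F (G.dist a r) a) (F (G.dist b r) b) → G.Adj a b := by
      have claim : ∀ a b : V, G'.Adj (F (G.dist a r) a) (F (G.dist b r) b) →
          G.dist b r = G.dist a r + 1 → G.Adj a b := by
        intro a b hadj' hd
        obtain ⟨hpadj, hpd⟩ := hpar b (by omega)
        have h1 : G'.Adj (F (G.dist (par b) r) (par b)) (F (G.dist b r) b) :=
          hadjφ _ _ hpadj
        have h2 : F (G.dist (par b) r) (par b) = F (G.dist a r) a := by
          apply parent_unique hT' r' (v := F (G.dist b r) b) h1 hadj'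
          · rw [hdist2, hdist2]; omega
          · rw [hdist2, hdist2]; omega
        have h3 : par b = a := hinj h2
        rw [← h3]
        exact hpadj
      intro a b hadj'
      rcases adj_dist_cases hT' r' hadj' with hd | hd
      · rw [hdist2, hdist2] at hd
        exact claim a b hadj' hd
      · rw [hdist2, hdist2] at hd
        exact (claim b a hadj'.symm hd).symm
    refine ⟨⟨Equiv.ofBijective (fun v => F (G.dist v r) v) ⟨hinj, hsurj⟩, ?_⟩, ?_⟩
    · intro a b
      exact ⟨hadjrev a b, hadjφ a b⟩
    · intro v
      exact (hβ1 v (F (G.dist v r) v) (hcls2 v).symm).symm
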